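/- Let w be a C² radial function of r ∈ (0, r₀), and suppose b := w'/r − (w')²/2 ≥ 0 and a := w'' + (w')²/2 ≥ 0 on (0, r₀) (the case k = n). If w'(r) → ∞ as r → 0⁺, then w'(r) = 2/r for all r ∈ (0, r₀), i.e. w(r) = 2 log r + C for some constant C. -/

import Mathlib

open Set Filter

/-- The case `k = n`: if the radial admissibility inequalities `b ≥ 0`, `a ≥ 0` hold on
`(0, r₀)` and `w'(r) → ∞` as `r → 0⁺`, then `w'(r) = 2/r`, i.e. `w = 2 log r + C`. -/
theorem stmt1 (r₀ : ℝ) (hr₀ : 0 < r₀) (w w' w'' : ℝ → ℝ)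
    (hD1 : ∀ r ∈ Set.Ioo (0:ℝ) r₀, HasDerivAt w (w' r) r)
    (hD2 : ∀ r ∈ Set.Ioo (0:ℝ) r₀, HasDerivAt w' (w'' r) r)
    (hb : ∀ r ∈ Set.Ioo (0:ℝ) r₀, 0 ≤ w' r / r - (w' r) ^ 2 / 2)
    (ha : ∀ r ∈ Set.Ioo (0:ℝ) r₀, 0 ≤ w'' r + (w' r) ^ 2 / 2)
    (hblow : Tendsto w' (nhdsWithin 0 (Set.Ioi 0)) atTop) :
    (∀ r ∈ Set.Ioo (0:ℝ) r₀, w' r = 2 / r) ∧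
    ∃ C : ℝ, ∀ r ∈ Set.Ioo (0:ℝ) r₀, w r = 2 * Real.log r + C := by
  -- w' is nonnegative on (0, r₀)
  have hnonneg : ∀ r ∈ Set.Ioo (0:ℝ) r₀, 0 ≤ w' r := by
    intro r hr
    by_contra hneg
    push_neg at hneg
    have := hb r hr
    have hrpos := hr.1
    have h1 : w' r / r < 0 := div_neg_of_neg_of_pos hneg hrpos
    nlinarith [sq_nonneg (w' r)]
  -- key lemma: on any subinterval (0,s) where w' > 0, we get w' = 2/r
  have key : ∀ s : ℝ, s ≤ r₀ → (∀ t ∈ Set.Ioo (0:ℝ) s, 0 < w' t) →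
      ∀ r ∈ Set.Ioo (0:ℝ) s, w' r = 2 / r := by
    intro s hs hpos
    set v : ℝ → ℝ := fun t => t / 2 - (w' t)⁻¹ with hv
    have hsub : Set.Ioo (0:ℝ) s ⊆ Set.Ioo (0:ℝ) r₀ := Set.Ioo_subset_Ioo le_rfl hs
    have hv' : ∀ t ∈ Set.Ioo (0:ℝ) s,
        HasDerivAt v (1/2 + w'' t / (w' t)^2) t := by
      intro t ht
      have hw := hpos t ht
      have h1 : HasDerivAt (fun u => (w' u)⁻¹) (-(w'' t) / (w' t)^2) t :=
        (hD2 t (hsub ht)).inv hw.ne'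
      have h2 : HasDerivAt (fun u : ℝ => u / 2) (1/2) t := by
        simpa using (hasDerivAt_id t).div_const 2
      have := h2.sub h1
      exact this.congr_deriv (by ring)
    have hv'nonneg : ∀ t ∈ Set.Ioo (0:ℝ) s, 0 ≤ 1/2 + w'' t / (w' t)^2 := by
      intro t ht
      have hw := hpos t ht
      have hsq : 0 < (w' t)^2 := pow_pos hw 2
      have h := ha t (hsub ht)
      have : -(1/2 : ℝ) ≤ w'' t / (w' t)^2 := by
        rw [le_div_iff₀ hsq]; linarith
      linarith
    have hmono : MonotoneOn v (Set.Ioo (0:ℝ) s) := by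
      apply monotoneOn_of_hasDerivWithinAt_nonneg (f' := fun t => 1/2 + w'' t / (w' t)^2)
        (convex_Ioo 0 s)
      · intro t ht
        exact (hv' t ht).continuousAt.continuousWithinAt
      · intro t ht
        rw [isOpen_Ioo.interior_eq] at ht
        exact (hv' t ht).hasDerivWithinAt
      · intro t ht
        rw [isOpen_Ioo.interior_eq] at ht
        exact hv'nonneg t ht
    have hvle : ∀ t ∈ Set.Ioo (0:ℝ) s, v t ≤ 0 := by
      intro t ht
      have hw := hpos t ht
      have hbt := hb t (hsub ht)
      have htpos := ht.1
      have h1 : t * w' t ≤ 2 := by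
        have h2 : 0 ≤ (w' t / t - (w' t)^2 / 2) * (t / w' t) :=
          mul_nonneg hbt (div_nonneg htpos.le hw.le)
        have h3 : (w' t / t - (w' t)^2 / 2) * (t / w' t) = 1 - t * w' t / 2 := by
          field_simp
        rw [h3] at h2; linarith
      have : t / 2 ≤ (w' t)⁻¹ := by
        rw [inv_eq_one_div, div_le_div_iff₀ two_pos hw]
        linarith
      simp only [hv]; linarith
    have hvlim : Tendsto v (nhdsWithin 0 (Set.Ioi 0)) (nhds 0) := by
      have h1 : Tendsto (fun t : ℝ => t / 2) (nhdsWithin 0 (Set.Ioi 0)) (nhds 0) := by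
        have := (continuous_id.div_const (2:ℝ)).tendsto (0:ℝ)
        simpa using this.mono_left nhdsWithin_le_nhds
      have h2 : Tendsto (fun t => (w' t)⁻¹) (nhdsWithin 0 (Set.Ioi 0)) (nhds 0) :=
        hblow.inv_tendsto_atTop
      simpa using h1.sub h2
    intro r hr
    have hvr0 : v r = 0 := by
      have hle := hvle r hr
      have hge : 0 ≤ v r := by
        refine le_of_tendsto hvlim ?_
        filter_upwards [Ioo_mem_nhdsGT hr.1] with u hu
        exact hmono ⟨hu.1, hu.2.trans hr.2⟩ hr (le_of_lt hu.2)
      linarith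
    have hw := hpos r hr
    have hrpos := hr.1
    have : (w' r)⁻¹ = r / 2 := by simp only [hv] at hvr0; linarith
    field_simp at this ⊢
    linarith
  -- w' > 0 everywhere on (0, r₀)
  have hpos : ∀ r ∈ Set.Ioo (0:ℝ) r₀, 0 < w' r := by
    by_contra hcon
    push_neg at hcon
    obtain ⟨r₁, hr₁, hr₁le⟩ := hcon
    have hr₁0 : w' r₁ = 0 := le_antisymm hr₁le (hnonneg r₁ hr₁)
    set Z : Set ℝ := {r ∈ Set.Ioo (0:ℝ) r₀ | w' r = 0} with hZ
    have hZne : Z.Nonempty := ⟨r₁, hr₁, hr₁0⟩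
    have hZbdd : BddBelow Z := ⟨0, fun z hz => hz.1.1.le⟩
    set σ := sInf Z with hσ
    -- near 0, w' ≥ 1
    obtain ⟨ε, hε, hεball⟩ : ∃ ε > 0, ∀ t, t ∈ Set.Ioi (0:ℝ) → |t - 0| < ε → 1 ≤ w' t := by
      have := hblow.eventually (eventually_ge_atTop (1:ℝ))
      rw [eventually_nhdsWithin_iff, Metric.eventually_nhds_iff] at this
      obtain ⟨ε, hε, h⟩ := this
      exact ⟨ε, hε, fun t ht hdist => h (by simpa using hdist) ht⟩
    have hεle : ∀ z ∈ Z, ε ≤ z := by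
      intro z hz
      by_contra hlt
      push_neg at hlt
      have := hεball z hz.1.1 (by rw [sub_zero, abs_of_pos hz.1.1]; exact hlt)
      rw [hz.2] at this; linarith
    have hσpos : 0 < σ := lt_of_lt_of_le hε (le_csInf hZne hεle)
    have hσlt : σ < r₀ := lt_of_le_of_lt (csInf_le hZbdd ⟨hr₁, hr₁0⟩) hr₁.2
    -- w' > 0 on (0, σ)
    have hposσ : ∀ t ∈ Set.Ioo (0:ℝ) σ, 0 < w' t := by
      intro t ht
      have htr₀ : t ∈ Set.Ioo (0:ℝ) r₀ := ⟨ht.1, ht.2.trans hσlt⟩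
      rcases (hnonneg t htr₀).lt_or_eq with h | h
      · exact h
      · exfalso
        have : t ∈ Z := ⟨htr₀, h.symm⟩
        have := csInf_le hZbdd this
        linarith [ht.2]
    have hkey := key σ hσlt.le hposσ
    -- σ ∈ Z (closure argument)
    have hσZ : w' σ = 0 := by
      have hclos : σ ∈ closure Z := csInf_mem_closure hZne hZbdd
      obtain ⟨u, hu, hulim⟩ := mem_closure_iff_seq_limit.1 hclos
      have hcont : ContinuousAt w' σ := (hD2 σ ⟨hσpos, hσlt⟩).continuousAt
      have h1 : Tendsto (fun n => w' (u n)) atTop (nhds (w' σ)) :=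
        hcont.tendsto.comp hulim
      have h2 : (fun n => w' (u n)) = fun _ => (0:ℝ) := funext fun n => (hu n).2
      rw [h2] at h1
      exact tendsto_nhds_unique h1 tendsto_const_nhds
    -- but the left limit of w' at σ is 2/σ
    have hne : (nhdsWithin σ (Set.Ioo (0:ℝ) σ)).NeBot := by
      apply mem_closure_iff_nhdsWithin_neBot.1
      rw [closure_Ioo hσpos.ne]
      exact ⟨hσpos.le, le_rfl⟩
    have hlim1 : Tendsto w' (nhdsWithin σ (Set.Ioo (0:ℝ) σ)) (nhds (w' σ)) :=
      ((hD2 σ ⟨hσpos, hσlt⟩).continuousAt.tendsto).mono_left nhdsWithin_le_nhds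
    have hlim2 : Tendsto w' (nhdsWithin σ (Set.Ioo (0:ℝ) σ)) (nhds (2 / σ)) := by
      have hcont2 : Tendsto (fun t : ℝ => 2 / t) (nhdsWithin σ (Set.Ioo (0:ℝ) σ)) (nhds (2 / σ)) := by
        have : ContinuousAt (fun t : ℝ => 2 / t) σ :=
          (continuousAt_const.div continuousAt_id (ne_of_gt hσpos))
        exact this.tendsto.mono_left nhdsWithin_le_nhds
      apply hcont2.congr'
      filter_upwards [self_mem_nhdsWithin] with t ht
      exact (hkey t ht).symm
    have h20 : w' σ = 2 / σ := tendsto_nhds_unique hlim1 hlim2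
    rw [hσZ] at h20
    have hpos2 : (0:ℝ) < 2 / σ := div_pos two_pos hσpos
    linarith
  have hmain : ∀ r ∈ Set.Ioo (0:ℝ) r₀, w' r = 2 / r := key r₀ le_rfl hpos
  refine ⟨hmain, ?_⟩
  -- constancy of w - 2 log
  set g : ℝ → ℝ := fun r => w r - 2 * Real.log r with hg
  have hg' : ∀ r ∈ Set.Ioo (0:ℝ) r₀, HasDerivAt g 0 r := by
    intro r hr
    have h1 : HasDerivAt (fun t : ℝ => 2 * Real.log t) (2 / r) r := by
      have := (Real.hasDerivAt_log (ne_of_gt hr.1)).const_mul 2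
      simpa [mul_comm, div_eq_mul_inv] using this
    have := (hD1 r hr).sub h1
    rw [hmain r hr] at this
    simp at this
    exact this
  have hconst : ∀ x ∈ Set.Ioo (0:ℝ) r₀, ∀ y ∈ Set.Ioo (0:ℝ) r₀, g x = g y := by
    intro x hx y hy
    wlog hxy : x ≤ y generalizing x y
    · exact (this y hy x hx (le_of_not_ge hxy)).symm
    have hIcc : Set.Icc x y ⊆ Set.Ioo (0:ℝ) r₀ := fun t ht =>
      ⟨lt_of_lt_of_le hx.1 ht.1, lt_of_le_of_lt ht.2 hy.2⟩
    have := constant_of_has_deriv_right_zero (f := g) (a := x) (b := y)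
      (fun t ht => (hg' t (hIcc ht)).continuousAt.continuousWithinAt)
      (fun t ht => (hg' t (hIcc ⟨ht.1, ht.2.le⟩)).hasDerivWithinAt)
    exact (this y ⟨hxy, le_rfl⟩).symm
  refine ⟨g (r₀ / 2), fun r hr => ?_⟩
  have hmem : r₀ / 2 ∈ Set.Ioo (0:ℝ) r₀ := ⟨by linarith, by linarith⟩
  have := hconst r hr (r₀/2) hmem
  simp only [hg] at this ⊢
  linarith
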